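/- For every finite nonempty set S of positive integers, there exists a connected signed bipartite graph whose signed degree set equals S. -/

import Mathlib

open Finset

namespace SDSAux

variable {S : Finset ℤ}

/-- number of elements of `S` that are `≤ x`. -/
def cnt (S : Finset ℤ) (x : ℤ) : ℕ := (S.filter (fun d => d ≤ x)).card

lemma cnt_mono {x y : ℤ} (h : x ≤ y) : cnt S x ≤ cnt S y := by
  apply card_le_card
  intro d hd
  simp only [mem_filter] at *
  exact ⟨hd.1, hd.2.trans h⟩

lemma cnt_le_card (x : ℤ) : cnt S x ≤ S.card := card_filter_le _ _

lemma cnt_succ {d : ℤ} (hd : d ∈ S) : cnt S d = cnt S (d - 1) + 1 := by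
  unfold cnt
  have h : S.filter (fun e => e ≤ d) = insert d (S.filter (fun e => e ≤ d - 1)) := by
    ext x
    simp only [mem_filter, mem_insert]
    constructor
    · rintro ⟨hx, hxd⟩
      rcases eq_or_lt_of_le hxd with h | h
      · left; exact h
      · right; exact ⟨hx, by omega⟩
    · rintro (rfl | ⟨hx, h⟩)
      · exact ⟨hd, le_refl _⟩
      · exact ⟨hx, by omega⟩
  rw [h, card_insert_of_notMem]
  simp only [mem_filter, not_and]
  intro _
  omega

lemma cnt_max (hS : S.Nonempty) : cnt S (S.max' hS) = S.card := by
  unfold cnt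
  rw [filter_true_of_mem]
  intro x hx
  exact S.le_max' x hx

lemma cnt_zero (hpos : ∀ x ∈ S, 0 < x) : cnt S 0 = 0 := by
  unfold cnt
  rw [filter_false_of_mem, card_empty]
  intro x hx
  have := hpos x hx
  omega

lemma exists_mem_cnt {x : ℤ} (h : 1 ≤ cnt S x) : ∃ e ∈ S, e ≤ x ∧ cnt S e = cnt S x := by
  have hne : (S.filter (fun d => d ≤ x)).Nonempty := card_pos.mp h
  set e := (S.filter (fun d => d ≤ x)).max' hne with he
  have hmem := (S.filter (fun d => d ≤ x)).max'_mem hne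
  rw [mem_filter] at hmem
  refine ⟨e, hmem.1, hmem.2, le_antisymm (cnt_mono hmem.2) ?_⟩
  apply card_le_card
  intro d hd
  simp only [mem_filter] at *
  exact ⟨hd.1, le_max' _ _ (by simp only [mem_filter]; exact hd)⟩

lemma exists_D (hS : S.Nonempty) {t : ℕ} (ht : t < S.card) :
    ∃ D ∈ S, cnt S (D - 1) ≤ t ∧ t < cnt S D := by
  have hT : (S.filter (fun e => t < cnt S e)).Nonempty := by
    refine ⟨S.max' hS, ?_⟩
    simp only [mem_filter]
    exact ⟨S.max'_mem hS, by rw [cnt_max hS]; exact ht⟩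
  set D := (S.filter (fun e => t < cnt S e)).min' hT with hD
  have hmem := (S.filter (fun e => t < cnt S e)).min'_mem hT
  rw [mem_filter] at hmem
  refine ⟨D, hmem.1, ?_, hmem.2⟩
  by_contra hcon
  push_neg at hcon
  obtain ⟨e, heS, heD, hecnt⟩ := exists_mem_cnt (by omega : 1 ≤ cnt S (D - 1))
  have : D ≤ e := min'_le _ _ (by simp only [mem_filter]; exact ⟨heS, by omega⟩)
  omega

lemma D_unique {t : ℕ} {D d : ℤ} (hD : D ∈ S) (hd : d ∈ S)
    (h1 : cnt S (D - 1) ≤ t) (h2 : t < cnt S D)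
    (h3 : cnt S (d - 1) ≤ t) (h4 : t < cnt S d) : D = d := by
  by_contra h
  rcases lt_or_gt_of_ne h with hlt | hlt
  · have := cnt_mono (show D ≤ d - 1 by omega) (S := S)
    omega
  · have := cnt_mono (show d ≤ D - 1 by omega) (S := S)
    omega

lemma exists_cnt_eq (hS : S.Nonempty) {t : ℕ} (h1 : 1 ≤ t) (h2 : t ≤ S.card) :
    ∃ e ∈ S, cnt S e = t := by
  obtain ⟨D, hD, hc1, hc2⟩ := exists_D hS (show t - 1 < S.card by omega)
  have := cnt_succ hD
  exact ⟨D, hD, by omega⟩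

lemma card_cnt_le (hS : S.Nonempty) (hpos : ∀ x ∈ S, 0 < x) {n : ℕ}
    (hn : (n : ℤ) = S.max' hS) {t : ℕ} {D : ℤ} (hD : D ∈ S)
    (h1 : cnt S (D - 1) ≤ t) (h2 : t < cnt S D) :
    ((Finset.univ.filter fun j : Fin n => cnt S ((j : ℕ) : ℤ) ≤ t).card : ℤ) = D := by
  have hD0 : 0 < D := hpos D hD
  have hDn : D.toNat ≤ n := by
    have := S.le_max' D hD
    omega
  have key : (Finset.univ.filter fun j : Fin n => cnt S ((j : ℕ) : ℤ) ≤ t)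
      = (Finset.range D.toNat).attachFin (fun m hm => lt_of_lt_of_le (mem_range.mp hm) hDn) := by
    ext j
    simp only [mem_filter, mem_univ, true_and, mem_attachFin, mem_range]
    constructor
    · intro hj
      by_contra hcon
      push_neg at hcon
      have : D ≤ ((j : ℕ) : ℤ) := by omega
      have := cnt_mono this (S := S)
      omega
    · intro hj
      have : ((j : ℕ) : ℤ) ≤ D - 1 := by omega
      have := cnt_mono this (S := S)
      omega
  rw [key, card_attachFin, card_range]
  omega

end SDSAux


/-- A signed bipartite graph `G(U,V)`: a simple bipartite graph with nonempty
finite parts `U` and `V` in which each edge is labeled positive or negative. -/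
structure SignedBipartiteGraph where
  U : Type
  V : Type
  [fU : Fintype U]
  [fV : Fintype V]
  [dU : DecidableEq U]
  [dV : DecidableEq V]
  nU : Nonempty U
  nV : Nonempty V
  /-- `pos u v = true` iff there is a positive edge `uv`. -/
  pos : U → V → Bool
  /-- `neg u v = true` iff there is a negative edge `uv`. -/
  neg : U → V → Bool
  /-- An edge cannot be both positive and negative (simple graph). -/
  disj : ∀ u v, ¬(pos u v = true ∧ neg u v = true)

namespace SignedBipartiteGraph

attribute [instance] fU fV dU dV

variable (G : SignedBipartiteGraph)

/-- Adjacency of the underlying bipartite graph on `U ⊕ V`. -/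
def adjFun : (G.U ⊕ G.V) → (G.U ⊕ G.V) → Prop
  | Sum.inl u, Sum.inr v => G.pos u v = true ∨ G.neg u v = true
  | Sum.inr v, Sum.inl u => G.pos u v = true ∨ G.neg u v = true
  | _, _ => False

/-- The underlying simple graph on `U ⊕ V`. -/
def graph : SimpleGraph (G.U ⊕ G.V) where
  Adj := G.adjFun
  symm := by constructor; intro a b h; cases a <;> cases b <;> simp_all [adjFun]
  loopless := by constructor; intro a h; cases a <;> simp_all [adjFun]

/-- The signed bipartite graph is connected if its underlying graph is. -/
def Connected : Prop := G.graph.Connected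

/-- Signed degree of a vertex in `U`: positive edges minus negative edges. -/
def sdegU (u : G.U) : ℤ :=
  ((Finset.univ.filter fun v => G.pos u v = true).card : ℤ) -
  ((Finset.univ.filter fun v => G.neg u v = true).card : ℤ)

/-- Signed degree of a vertex in `V`. -/
def sdegV (v : G.V) : ℤ :=
  ((Finset.univ.filter fun u => G.pos u v = true).card : ℤ) -
  ((Finset.univ.filter fun u => G.neg u v = true).card : ℤ)

/-- The signed degree set: the set of distinct signed degrees of the vertices. -/
def sdegSet : Set ℤ := Set.range G.sdegU ∪ Set.range G.sdegV

end SignedBipartiteGraph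

open SDSAux in
/-- Every finite nonempty set of positive integers is the signed degree set of
some connected signed bipartite graph. -/
theorem signed_degree_set_of_positive (S : Finset ℤ) (hS : S.Nonempty)
    (hpos : ∀ x ∈ S, 0 < x) :
    ∃ G : SignedBipartiteGraph, G.Connected ∧ G.sdegSet = ↑S := by
  classical
  set M := S.max' hS with hM
  have hMmem : M ∈ S := S.max'_mem hS
  have hMpos : 0 < M := hpos M hMmem
  set n := M.toNat with hn
  have hnM : (n : ℤ) = M := Int.toNat_of_nonneg hMpos.le
  have hn0 : 0 < n := by omega
  set k := S.card with hk
  have hk0 : 0 < k := card_pos.mpr hS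
  set G : SignedBipartiteGraph :=
    { U := Fin n
      V := Fin n
      nU := ⟨⟨0, hn0⟩⟩
      nV := ⟨⟨0, hn0⟩⟩
      pos := fun i j => decide (cnt S ((i : ℕ) : ℤ) + cnt S ((j : ℕ) : ℤ) < k)
      neg := fun _ _ => false
      disj := by intro u v h; simp at h } with hG
  -- basic counting facts
  have hcnt_lt : ∀ i : Fin n, cnt S ((i : ℕ) : ℤ) + 1 ≤ k := by
    intro i
    have h1 : ((i : ℕ) : ℤ) ≤ M - 1 := by
      have := i.isLt
      omega
    have h2 := cnt_mono h1 (S := S)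
    have h3 := cnt_succ hMmem
    have h4 : cnt S M = k := by rw [hM, hk]; exact cnt_max hS
    omega
  set deg : Fin n → ℤ := fun i =>
    ((Finset.univ.filter fun j : Fin n =>
      cnt S ((i : ℕ) : ℤ) + cnt S ((j : ℕ) : ℤ) < k).card : ℤ) with hdeg
  have hU : ∀ i : Fin n, G.sdegU i = deg i := by
    intro i
    simp [hG, SignedBipartiteGraph.sdegU, hdeg]
    congr 1
    ext v
    simp only [mem_filter, mem_univ, true_and]
    exact decide_eq_true_iff
  have hV : ∀ j : Fin n, G.sdegV j = deg j := by
    intro j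
    simp only [hG, SignedBipartiteGraph.sdegV, hdeg]
    have : (Finset.univ.filter fun u : Fin n =>
        (decide (cnt S ((u : ℕ) : ℤ) + cnt S ((j : ℕ) : ℤ) < k)) = true)
        = (Finset.univ.filter fun u : Fin n =>
        cnt S ((j : ℕ) : ℤ) + cnt S ((u : ℕ) : ℤ) < k) := by
      apply filter_congr
      intro u _
      simp [Nat.add_comm]
    rw [this]
    simp
  -- the main degree computation
  have hmain : ∀ i : Fin n, ∀ D ∈ S,
      cnt S (D - 1) ≤ k - 1 - cnt S ((i : ℕ) : ℤ) →
      k - 1 - cnt S ((i : ℕ) : ℤ) < cnt S D → deg i = D := by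
    intro i D hD h1 h2
    have hfc : (Finset.univ.filter fun j : Fin n =>
        cnt S ((i : ℕ) : ℤ) + cnt S ((j : ℕ) : ℤ) < k)
        = (Finset.univ.filter fun j : Fin n =>
          cnt S ((j : ℕ) : ℤ) ≤ k - 1 - cnt S ((i : ℕ) : ℤ)) := by
      apply filter_congr
      intro j _
      have := hcnt_lt i
      constructor
      · intro h; omega
      · intro h; omega
    rw [hdeg]
    simp only
    rw [hfc]
    exact card_cnt_le hS hpos hnM hD h1 h2
  have hmem : ∀ i : Fin n, deg i ∈ S := by
    intro i
    have ht : k - 1 - cnt S ((i : ℕ) : ℤ) < k := by have := hcnt_lt i; omega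
    obtain ⟨D, hD, h1, h2⟩ := exists_D hS ht
    rw [hmain i D hD h1 h2]
    exact hD
  have hsurj : ∀ d ∈ S, ∃ i : Fin n, deg i = d := by
    intro d hd
    have hd1 : 1 ≤ cnt S d := by have := cnt_succ hd; omega
    have hdk : cnt S d ≤ k := cnt_le_card d
    -- find i with cnt S i = k - cnt S d
    have : ∃ i : Fin n, cnt S ((i : ℕ) : ℤ) = k - cnt S d := by
      rcases eq_or_lt_of_le hdk with heq | hlt
      · refine ⟨⟨0, hn0⟩, ?_⟩
        simp only [Fin.val_mk, Nat.cast_zero]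
        rw [cnt_zero hpos]
        omega
      · obtain ⟨e, he, hce⟩ := exists_cnt_eq hS (t := k - cnt S d) (by omega) (by omega)
        have he0 : 0 < e := hpos e he
        have heM : e < M := by
          have hcM : cnt S M = k := by rw [hM, hk]; exact cnt_max hS
          rcases eq_or_lt_of_le (S.le_max' e he) with h | h
          · exfalso
            rw [← hM] at h
            rw [h, hcM] at hce
            omega
          · rw [← hM] at h; exact h
        refine ⟨⟨e.toNat, by omega⟩, ?_⟩
        simp only [Fin.val_mk]
        rw [Int.toNat_of_nonneg he0.le]
        exact hce
    obtain ⟨i, hi⟩ := this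
    refine ⟨i, hmain i d hd ?_ ?_⟩
    · have := cnt_succ hd; omega
    · omega
  refine ⟨G, ?_, ?_⟩
  · -- connectivity
    have hnonempty : Nonempty (G.U ⊕ G.V) := ⟨Sum.inl ⟨0, hn0⟩⟩
    have hadj : ∀ i j : Fin n, cnt S ((i : ℕ) : ℤ) + cnt S ((j : ℕ) : ℤ) < k →
        G.graph.Adj (Sum.inl i) (Sum.inr j) := by
      intro i j h
      have hp : G.pos i j = true := by exact decide_eq_true h
      exact Or.inl hp
    have hc0 : cnt S (((⟨0, hn0⟩ : Fin n) : ℕ) : ℤ) = 0 := by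
      simp only [Fin.val_mk, Nat.cast_zero]
      exact cnt_zero hpos
    have hbase : ∀ w : G.U ⊕ G.V, G.graph.Reachable (Sum.inr ⟨0, hn0⟩) w := by
      intro w
      cases w with
      | inl i =>
        exact ((hadj i ⟨0, hn0⟩ (by rw [hc0]; have := hcnt_lt i; omega)).symm).reachable
      | inr j =>
        refine SimpleGraph.Reachable.trans ?_
          ((hadj ⟨0, hn0⟩ j (by rw [hc0]; have := hcnt_lt j; omega)).reachable)
        exact ((hadj ⟨0, hn0⟩ ⟨0, hn0⟩ (by rw [hc0]; omega)).symm).reachable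
    exact ⟨fun a b => (hbase a).symm.trans (hbase b)⟩
  · -- degree set
    ext x
    simp only [SignedBipartiteGraph.sdegSet, Set.mem_union, Set.mem_range,
      Finset.coe_sort_coe, Finset.mem_coe]
    constructor
    · rintro (⟨i, rfl⟩ | ⟨j, rfl⟩)
      · rw [hU i]; exact hmem i
      · rw [hV j]; exact hmem j
    · intro hx
      obtain ⟨i, hi⟩ := hsurj x hx
      exact Or.inl ⟨i, by rw [hU i, hi]⟩
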